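/- Let λ ∈ X be a dominant integral weight and let w ∈ W have reduced word w = s_{i_1}⋯s_{i_k}. Then the convex hull in V of the support of the Demazure character D_{i_1}⋯D_{i_k}(e^λ) equals the convex hull of {uλ : u ∈ W, u ≤ w}. -/

import Mathlib

open scoped Classical

/-- Data of a root system with a fixed choice of simple roots: an ambient
`ℚ`-vector space `V`, a set of roots `Φ` with a distinguished subset `pos` of
positive roots, a coroot functional `coroot β = ⟨·, β^∨⟩` for each root, and
simple roots `α 1, …, α r`. -/
structure RootData where
  r : ℕ
  V : Type
  [grp : AddCommGroup V]
  [mod : Module ℚ V]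
  Φ : Set V
  pos : Set V
  coroot : V → Module.Dual ℚ V
  α : Fin r → V

attribute [instance] RootData.grp RootData.mod

namespace RootData

variable (R : RootData)

/-- The group of linear automorphisms of `V`, in which the Weyl group lives. -/
abbrev Aut : Type := R.V ≃ₗ[ℚ] R.V

/-- The linear map `v ↦ v - ⟨v, β^∨⟩ β`. -/
noncomputable def reflMap (β : R.V) : R.V →ₗ[ℚ] R.V :=
  LinearMap.id - (R.coroot β).smulRight β

/-- The reflection `s_β` associated to a root `β`, as a linear automorphism. -/
noncomputable def s (β : R.V) : R.Aut :=
  if h : (R.reflMap β).comp (R.reflMap β) = LinearMap.id then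
    LinearEquiv.ofLinear (R.reflMap β) (R.reflMap β) h h
  else LinearEquiv.refl ℚ R.V

/-- The simple reflections `s_i := s_{α_i}`. -/
noncomputable def S (i : Fin R.r) : R.Aut := R.s (R.α i)

/-- The Weyl group `W`, generated by the simple reflections. -/
noncomputable def weylGroup : Subgroup R.Aut := Subgroup.closure (Set.range R.S)

/-- The product `s_{i_1} ⋯ s_{i_k}` of a word in the simple reflections. -/
noncomputable def wordProd (l : List (Fin R.r)) : R.Aut := (l.map R.S).prod

/-- The length function on `W`: least length of a word in the simple
reflections expressing the given element. -/
noncomputable def len (w : R.Aut) : ℕ :=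
  sInf {n | ∃ l : List (Fin R.r), l.length = n ∧ R.wordProd l = w}

/-- A word is reduced if its length equals the length of its product. -/
def Reduced (l : List (Fin R.r)) : Prop := R.len (R.wordProd l) = l.length

/-- The Bruhat order on `W`: `u ≤ w` iff some reduced word for `w` has a
subword whose product is `u`. -/
def BruhatLE (u w : R.Aut) : Prop :=
  ∃ l : List (Fin R.r), R.Reduced l ∧ R.wordProd l = w ∧
    ∃ l' : List (Fin R.r), l'.Sublist l ∧ R.wordProd l' = u

/-- Strict Bruhat order. -/
def BruhatLT (u w : R.Aut) : Prop := R.BruhatLE u w ∧ u ≠ w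

/-- One step of the Demazure product: `s_i * w := max {w, s_i w}`. -/
noncomputable def dmulStep (i : Fin R.r) (x : R.Aut) : R.Aut :=
  if R.len x < R.len (R.S i * x) then R.S i * x else x

/-- Demazure product of a word in the simple reflections against `w`:
`s_{i_1} * (s_{i_2} * (⋯ * (s_{i_k} * w)))`. -/
noncomputable def dmulList (l : List (Fin R.r)) (w : R.Aut) : R.Aut :=
  l.foldr R.dmulStep w

/-- The Demazure product `v * w` on the Weyl group, computed by choosing a
reduced word for `v` (it is independent of this choice). -/
noncomputable def dmul (v w : R.Aut) : R.Aut :=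
  if h : ∃ l : List (Fin R.r), R.Reduced l ∧ R.wordProd l = v then
    R.dmulList h.choose w
  else v * w

/-- The parabolic subgroup `W_{P_i}` generated by the simple reflections
`s_j`, `j ≠ i`. -/
noncomputable def WPar (i : Fin R.r) : Subgroup R.Aut :=
  Subgroup.closure (R.S '' {j | j ≠ i})

/-- `W^{P_i}`: the set of minimal-length representatives of cosets of
`W/W_{P_i}`. -/
def minReps (i : Fin R.r) : Set R.Aut :=
  {v | v ∈ R.weylGroup ∧ ∀ p ∈ R.WPar i, R.len v ≤ R.len (v * p)}

/-- `u` is the minimal-length representative of the coset `w W_{P_i}`. -/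
def IsMinRep (i : Fin R.r) (u w : R.Aut) : Prop :=
  u ∈ R.minReps i ∧ u⁻¹ * w ∈ R.WPar i

/-- A weight is dominant if it pairs nonnegatively with every simple coroot. -/
def Dominant (lam : R.V) : Prop := ∀ i : Fin R.r, 0 ≤ R.coroot (R.α i) lam

/-- The dual action of the Weyl group on `V* `: `(u f)(v) = f(u⁻¹ v)`. -/
noncomputable def dualAct (u : R.Aut) (f : Module.Dual ℚ R.V) : Module.Dual ℚ R.V :=
  f.comp (u.symm : R.V →ₗ[ℚ] R.V)

/-- The Demazure polytope `P_λ^w := conv {uλ : u ∈ W, u ≤ w}`. -/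
noncomputable def demPolytope (lam : R.V) (w : R.Aut) : Set R.V :=
  convexHull ℚ {m | ∃ u : R.Aut, u ∈ R.weylGroup ∧ R.BruhatLE u w ∧ m = u lam}

/-- Membership in the weight lattice `X`. -/
def IsWeight (lam : R.V) : Prop := ∀ β ∈ R.Φ, ∃ m : ℤ, R.coroot β lam = (m : ℚ)

/-- The root lattice `Q = ℤΦ`. -/
noncomputable def rootLattice : AddSubgroup R.V := AddSubgroup.closure R.Φ

/-- `w₀` is the longest element of the Weyl group. -/
def IsLongest (w₀ : R.Aut) : Prop :=
  w₀ ∈ R.weylGroup ∧ ∀ g ∈ R.weylGroup, R.len g ≤ R.len w₀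

/-- The positive roots `Φ_{P_i}⁺ = Φ⁺ ∩ span {α_j : j ≠ i}` of the standard
Levi subsystem. -/
def parPos (i : Fin R.r) : Set R.V :=
  {η | η ∈ R.pos ∧ η ∈ Submodule.span ℚ (R.α '' {j | j ≠ i})}

/-- The value `D_i (e^λ)` of the Demazure operator on a basis element of the
group ring `ℤ[X]`. -/
noncomputable def demOnBasis (i : Fin R.r) (lam : R.V) : R.V →₀ ℤ :=
  if 0 ≤ ⌊R.coroot (R.α i) lam⌋ then
    ∑ k ∈ Finset.range (⌊R.coroot (R.α i) lam⌋.toNat + 1),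
      Finsupp.single (lam - (k : ℚ) • R.α i) 1
  else if ⌊R.coroot (R.α i) lam⌋ = -1 then 0
  else - ∑ k ∈ Finset.range ((-⌊R.coroot (R.α i) lam⌋).toNat - 1),
      Finsupp.single (lam + ((k : ℚ) + 1) • R.α i) 1

/-- The Demazure operator `D_i`, as a `ℤ`-linear endomorphism of the group
ring `ℤ[X]` (realized as finitely supported functions `V →₀ ℤ`). -/
noncomputable def demOp (i : Fin R.r) : (R.V →₀ ℤ) →ₗ[ℤ] (R.V →₀ ℤ) :=
  Finsupp.lsum ℤ fun lam => LinearMap.toSpanSingleton ℤ (R.V →₀ ℤ) (R.demOnBasis i lam)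

/-- The Demazure character `D_{i_1} ⋯ D_{i_k} (e^λ)`. -/
noncomputable def demChar (l : List (Fin R.r)) (lam : R.V) : R.V →₀ ℤ :=
  l.foldr (fun i p => R.demOp i p) (Finsupp.single lam 1)

/-- The axioms of a finite crystallographic root system spanning `V`, with
simple roots `α_i` and positive roots `pos`. -/
structure IsRootSystem (R : RootData) : Prop where
  finite : R.Φ.Finite
  span_top : Submodule.span ℚ R.Φ = ⊤
  ne_zero : ∀ β ∈ R.Φ, β ≠ 0
  coroot_self : ∀ β ∈ R.Φ, R.coroot β β = 2
  crystallographic : ∀ β ∈ R.Φ, ∀ γ ∈ R.Φ, ∃ m : ℤ, R.coroot β γ = (m : ℚ)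
  reflection_stable : ∀ β ∈ R.Φ, ∀ γ ∈ R.Φ, γ - R.coroot β γ • β ∈ R.Φ
  simple_mem : ∀ i, R.α i ∈ R.Φ
  indep : LinearIndependent ℚ R.α
  pos_subset : R.pos ⊆ R.Φ
  pos_or_neg : ∀ β ∈ R.Φ, (β ∈ R.pos ∧ -β ∉ R.pos) ∨ (β ∉ R.pos ∧ -β ∈ R.pos)
  simple_pos : ∀ i, R.α i ∈ R.pos
  pos_nonneg_comb : ∀ β ∈ R.pos, ∃ c : Fin R.r → ℚ, (∀ i, 0 ≤ c i) ∧ β = ∑ i, c i • R.α i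

end RootData

namespace RootData

variable {R : RootData}

/-! ### Basic facts about reflections -/

lemma reflMap_apply (β v : R.V) : R.reflMap β v = v - R.coroot β v • β := by
  simp [reflMap]

lemma reflMap_invol {β : R.V} (h2 : R.coroot β β = 2) :
    (R.reflMap β).comp (R.reflMap β) = LinearMap.id := by
  ext v
  simp only [LinearMap.comp_apply, reflMap_apply, LinearMap.id_apply, map_sub, map_smul, h2,
    smul_eq_mul]
  module

lemma s_apply {β : R.V} (h2 : R.coroot β β = 2) (v : R.V) :
    R.s β v = v - R.coroot β v • β := by
  rw [RootData.s, dif_pos (reflMap_invol h2)]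
  rfl

lemma s_apply_self {β : R.V} (h2 : R.coroot β β = 2) : R.s β β = -β := by
  rw [s_apply h2, h2]; module

lemma aut_mul_apply (g h : R.Aut) (v : R.V) : (g * h) v = g (h v) := rfl

lemma aut_one_apply (v : R.V) : (1 : R.Aut) v = v := rfl

lemma aut_apply_inv_apply (g : R.Aut) (v : R.V) : g (g⁻¹ v) = v := by
  rw [← aut_mul_apply, mul_inv_cancel, aut_one_apply]

lemma aut_inv_apply_apply (g : R.Aut) (v : R.V) : g⁻¹ (g v) = v := by
  rw [← aut_mul_apply, inv_mul_cancel, aut_one_apply]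

variable (hR : R.IsRootSystem)
include hR

lemma s_apply' {β : R.V} (hβ : β ∈ R.Φ) (v : R.V) :
    R.s β v = v - R.coroot β v • β := s_apply (hR.coroot_self β hβ) v

lemma neg_mem_Φ {β : R.V} (hβ : β ∈ R.Φ) : -β ∈ R.Φ := by
  have := hR.reflection_stable β hβ β hβ
  rwa [hR.coroot_self β hβ, two_smul, sub_add_cancel_left] at this

lemma s_mem_Φ {β γ : R.V} (hβ : β ∈ R.Φ) (hγ : γ ∈ R.Φ) : R.s β γ ∈ R.Φ := by
  rw [s_apply' hR hβ]
  exact hR.reflection_stable β hβ γ hγ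

lemma s_mul_self {β : R.V} (hβ : β ∈ R.Φ) : R.s β * R.s β = 1 := by
  have h2 := hR.coroot_self β hβ
  apply LinearEquiv.toLinearMap_injective
  apply LinearMap.ext
  intro v
  show R.s β (R.s β v) = v
  simp only [s_apply h2, map_sub, map_smul, h2, smul_eq_mul]
  module

lemma s_inv {β : R.V} (hβ : β ∈ R.Φ) : (R.s β)⁻¹ = R.s β :=
  inv_eq_of_mul_eq_one_left (s_mul_self hR hβ)

/-! ### The big reflection group and the invariant form -/

end RootData

/-- The group generated by all reflections in roots. -/
noncomputable def RootData.bigG (R : RootData) : Subgroup R.Aut :=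
  Subgroup.closure (R.s '' R.Φ)

namespace RootData

variable {R : RootData} (hR : R.IsRootSystem)
include hR

lemma s_mem_bigG {β : R.V} (hβ : β ∈ R.Φ) : R.s β ∈ R.bigG :=
  Subgroup.subset_closure ⟨β, hβ, rfl⟩

lemma weylGroup_le_bigG : R.weylGroup ≤ R.bigG := by
  apply Subgroup.closure_le _ |>.2
  rintro - ⟨i, rfl⟩
  exact s_mem_bigG hR (hR.simple_mem i)

lemma bigG_maps {g : R.Aut} (hg : g ∈ R.bigG) : ∀ γ ∈ R.Φ, g γ ∈ R.Φ := by
  have key : ∀ g ∈ R.bigG, (∀ γ ∈ R.Φ, g γ ∈ R.Φ) ∧ (∀ γ ∈ R.Φ, g⁻¹ γ ∈ R.Φ) := by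
    intro g hg
    induction hg using Subgroup.closure_induction with
    | mem x hx =>
      obtain ⟨β, hβ, rfl⟩ := hx
      rw [s_inv hR hβ]
      exact ⟨fun γ hγ => s_mem_Φ hR hβ hγ, fun γ hγ => s_mem_Φ hR hβ hγ⟩
    | one => simpa using ⟨fun γ hγ => hγ, fun γ hγ => hγ⟩
    | mul x y hx hy ihx ihy =>
      refine ⟨fun γ hγ => ihx.1 _ (ihy.1 γ hγ), fun γ hγ => ?_⟩
      rw [mul_inv_rev]
      exact ihy.2 _ (ihx.2 γ hγ)
    | inv x hx ihx => simpa using ⟨ihx.2, ihx.1⟩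
  exact (key g hg).1

lemma finiteDimensional : FiniteDimensional ℚ R.V := by
  have : Module.Finite ℚ (⊤ : Submodule ℚ R.V) := by
    rw [← hR.span_top]
    exact FiniteDimensional.span_of_finite ℚ hR.finite
  exact Module.Finite.equiv (LinearEquiv.ofTop ⊤ rfl)

lemma finite_bigG : Finite R.bigG := by
  have hΦfin : Finite R.Φ := hR.finite
  have : Finite (R.Φ → R.Φ) := Pi.finite
  apply Finite.of_injective (fun g : R.bigG => fun x : R.Φ => (⟨g.1 x.1, bigG_maps hR g.2 x.1 x.2⟩ : R.Φ))
  intro g₁ g₂ h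
  have h' : ∀ x ∈ R.Φ, g₁.1.toLinearMap x = g₂.1.toLinearMap x := by
    intro x hx
    exact congrArg Subtype.val (congrFun h ⟨x, hx⟩)
  exact Subtype.ext (LinearEquiv.toLinearMap_injective (LinearMap.ext_on hR.span_top h'))

/-- Existence of an invariant positive-definite symmetric bilinear form. -/
lemma exists_form : ∃ B : R.V →ₗ[ℚ] R.V →ₗ[ℚ] ℚ,
    (∀ x y, B x y = B y x) ∧ (∀ x, x ≠ 0 → 0 < B x x) ∧
    (∀ g ∈ R.bigG, ∀ x y, B (g x) (g y) = B x y) := by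
  haveI := finiteDimensional hR
  haveI := finite_bigG hR
  haveI : Fintype R.bigG := Fintype.ofFinite _
  set b := Module.finBasis ℚ R.V with hb
  set B : R.V →ₗ[ℚ] R.V →ₗ[ℚ] ℚ := LinearMap.mk₂ ℚ
    (fun x y => ∑ g : R.bigG, ∑ i, b.repr (g.1 x) i * b.repr (g.1 y) i)
    (by intro x x' y; simp [map_add, add_mul, Finset.sum_add_distrib])
    (by intro c x y; simp [map_smul, Finset.mul_sum, mul_assoc])
    (by intro x y y'; simp [map_add, mul_add, Finset.sum_add_distrib])
    (by intro c x y
        simp only [map_smul, Finsupp.smul_apply, smul_eq_mul, Finset.mul_sum]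
        congr 1; ext g; congr 1; ext i; ring) with hB
  have happ : ∀ x y, B x y = ∑ g : R.bigG, ∑ i, b.repr (g.1 x) i * b.repr (g.1 y) i := by
    intro x y; rfl
  refine ⟨B, ?_, ?_, ?_⟩
  · intro x y; rw [happ, happ]
    congr 1; ext g; congr 1; ext i; ring
  · intro x hx
    rw [happ]
    have hone : ∀ i, b.repr ((1 : R.bigG).1 x) i * b.repr ((1 : R.bigG).1 x) i
        = b.repr x i * b.repr x i := by intro i; rfl
    apply Finset.sum_pos' (fun g _ => Finset.sum_nonneg fun i _ => mul_self_nonneg _)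
    refine ⟨1, Finset.mem_univ _, ?_⟩
    have hx' : b.repr x ≠ 0 := fun h => hx (by simpa using congrArg b.repr.symm h)
    obtain ⟨i, hi⟩ := Finsupp.ne_iff.1 hx'
    apply Finset.sum_pos' (fun i _ => mul_self_nonneg _)
    exact ⟨i, Finset.mem_univ _, by rw [hone]; exact mul_self_pos.2 hi⟩
  · intro g hg x y
    rw [happ, happ]
    exact Fintype.sum_equiv (Equiv.mulRight (⟨g, hg⟩ : R.bigG)) _ _ (fun h => rfl)

end RootData
set_option linter.unusedSectionVars false

namespace RootData

variable {R : RootData} (hR : R.IsRootSystem)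
include hR

/-- The invariant form together with the key identity relating it to coroots. -/
lemma exists_form' : ∃ B : R.V →ₗ[ℚ] R.V →ₗ[ℚ] ℚ,
    (∀ x y, B x y = B y x) ∧ (∀ x, x ≠ 0 → 0 < B x x) ∧
    (∀ g ∈ R.bigG, ∀ x y, B (g x) (g y) = B x y) ∧
    (∀ γ ∈ R.Φ, ∀ v, R.coroot γ v * B γ γ = 2 * B γ v) := by
  obtain ⟨B, hsymm, hpos, hinv⟩ := exists_form hR
  refine ⟨B, hsymm, hpos, hinv, ?_⟩
  intro γ hγ v
  have h1 : B (R.s γ v) (R.s γ γ) = B v γ := hinv _ (s_mem_bigG hR hγ) v γ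
  rw [s_apply_self (hR.coroot_self γ hγ), s_apply' hR hγ] at h1
  simp only [map_neg, map_sub, map_smul, LinearMap.sub_apply, LinearMap.smul_apply,
    smul_eq_mul] at h1
  have := hsymm v γ
  nlinarith [hsymm v γ]

lemma coroot_smul_eq {β : R.V} (hβ : β ∈ R.Φ) {c : ℚ} (hc : c ≠ 0) (hcβ : c • β ∈ R.Φ)
    (v : R.V) : R.coroot (c • β) v * c = R.coroot β v := by
  obtain ⟨B, hsymm, hpos, hinv, hkey⟩ := exists_form' hR
  have hβ0 : β ≠ 0 := hR.ne_zero β hβ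
  have hBβ : 0 < B β β := hpos β hβ0
  have h1 := hkey _ hcβ v
  have h2 := hkey _ hβ v
  simp only [map_smul, LinearMap.smul_apply, smul_eq_mul] at h1
  -- h1 : coroot (c•β) v * (c * (c * B β β)) = 2 * (c * B β v)
  have hc2 : R.coroot (c • β) v * c * (c * B β β) = R.coroot β v * (c * B β β) := by
    linear_combination h1 - c * h2
  exact mul_right_cancel₀ (by positivity) hc2

lemma coroot_neg_eq {β : R.V} (hβ : β ∈ R.Φ) (v : R.V) :
    R.coroot (-β) v = - R.coroot β v := by
  have h := coroot_smul_eq hR hβ (c := -1) (by norm_num)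
    (by rw [neg_one_smul]; exact neg_mem_Φ hR hβ) v
  rw [neg_one_smul] at h
  linarith

lemma coroot_equivariant {g : R.Aut} (hg : g ∈ R.bigG) {β : R.V} (hβ : β ∈ R.Φ) (v : R.V) :
    R.coroot (g β) v = R.coroot β (g⁻¹ v) := by
  obtain ⟨B, hsymm, hpos, hinv, hkey⟩ := exists_form' hR
  have hgβ : g β ∈ R.Φ := bigG_maps hR hg β hβ
  have hB : B (g β) (g β) = B β β := hinv g hg β β
  have h1 := hkey _ hgβ v
  have h2 := hkey _ hβ (g⁻¹ v)
  have hv : B (g β) v = B β (g⁻¹ v) := by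
    have h := hinv g hg β (g⁻¹ v)
    rwa [aut_apply_inv_apply] at h
  have hBβ : 0 < B β β := hpos β (hR.ne_zero β hβ)
  rw [hB, hv] at h1
  exact mul_right_cancel₀ (ne_of_gt hBβ) (by rw [h1, h2])

lemma s_conj {g : R.Aut} (hg : g ∈ R.bigG) {β : R.V} (hβ : β ∈ R.Φ) :
    R.s (g β) = g * R.s β * g⁻¹ := by
  have hgβ : g β ∈ R.Φ := bigG_maps hR hg β hβ
  apply LinearEquiv.toLinearMap_injective
  apply LinearMap.ext
  intro v
  show R.s (g β) v = g (R.s β (g⁻¹ v))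
  rw [s_apply' hR hgβ, s_apply' hR hβ, coroot_equivariant hR hg hβ]
  rw [map_sub, map_smul]
  congr 1
  exact (aut_apply_inv_apply g v).symm

lemma dominant_coroot_nonneg {lam : R.V} (hdom : R.Dominant lam) {β : R.V}
    (hβ : β ∈ R.pos) : 0 ≤ R.coroot β lam := by
  obtain ⟨B, hsymm, hpos, hinv, hkey⟩ := exists_form' hR
  have hβΦ : β ∈ R.Φ := hR.pos_subset hβ
  have hBβ : 0 < B β β := hpos β (hR.ne_zero β hβΦ)
  have h1 := hkey _ hβΦ lam
  have hBlam : 0 ≤ B β lam := by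
    obtain ⟨c, hc0, hcsum⟩ := hR.pos_nonneg_comb β hβ
    have : B β lam = ∑ i, c i * B (R.α i) lam := by
      rw [hcsum]; simp [map_sum, map_smul]
    rw [this]
    apply Finset.sum_nonneg
    intro i _
    apply mul_nonneg (hc0 i)
    have hαi := hkey _ (hR.simple_mem i) lam
    have hαpos : 0 < B (R.α i) (R.α i) := hpos _ (hR.ne_zero _ (hR.simple_mem i))
    nlinarith [hdom i]
  nlinarith

end RootData
namespace RootData

variable {R : RootData} (hR : R.IsRootSystem)
include hR

/-! ### Simple reflections -/

lemma S_apply (i : Fin R.r) (v : R.V) : R.S i v = v - R.coroot (R.α i) v • R.α i :=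
  s_apply (hR.coroot_self _ (hR.simple_mem i)) v

lemma S_mul_self (i : Fin R.r) : R.S i * R.S i = 1 := s_mul_self hR (hR.simple_mem i)

lemma S_inv (i : Fin R.r) : (R.S i)⁻¹ = R.S i := s_inv hR (hR.simple_mem i)

lemma S_mem_weylGroup (i : Fin R.r) : R.S i ∈ R.weylGroup :=
  Subgroup.subset_closure ⟨i, rfl⟩

lemma weyl_mem_bigG {w : R.Aut} (hw : w ∈ R.weylGroup) : w ∈ R.bigG :=
  weylGroup_le_bigG hR hw

lemma s_neg {β : R.V} (hβ : β ∈ R.Φ) : R.s (-β) = R.s β := by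
  apply LinearEquiv.toLinearMap_injective
  apply LinearMap.ext
  intro v
  have hnβ : -β ∈ R.Φ := neg_mem_Φ hR hβ
  show R.s (-β) v = R.s β v
  rw [s_apply' hR hnβ, s_apply' hR hβ, coroot_neg_eq hR hβ, smul_neg, neg_smul, neg_neg]

/-! ### Positivity combinatorics -/

lemma pos_of_nonneg_comb {β : R.V} (hβ : β ∈ R.Φ) {c : Fin R.r → ℚ} (hc : ∀ i, 0 ≤ c i)
    (hsum : β = ∑ i, c i • R.α i) : β ∈ R.pos := by
  rcases hR.pos_or_neg β hβ with h | h
  · exact h.1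
  · obtain ⟨d, hd, hdsum⟩ := hR.pos_nonneg_comb _ h.2
    exfalso
    have hzero : ∑ i, (c i + d i) • R.α i = 0 := by
      simp only [add_smul, Finset.sum_add_distrib, ← hsum, ← hdsum]
      abel
    have hlin := Fintype.linearIndependent_iff.1 hR.indep (fun i => c i + d i) hzero
    apply hR.ne_zero β hβ
    rw [hsum]
    apply Finset.sum_eq_zero
    intro i _
    have h2 : c i + d i = 0 := hlin i
    have hci : c i = 0 := le_antisymm (by linarith [hd i]) (hc i)
    rw [hci, zero_smul]

lemma neg_not_pos {β : R.V} (hβ : β ∈ R.pos) : -β ∉ R.pos := by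
  rcases hR.pos_or_neg β (hR.pos_subset hβ) with h | h
  · exact h.2
  · exact absurd hβ h.1

lemma pos_or_neg' {β : R.V} (hβ : β ∈ R.Φ) (h : β ∉ R.pos) : -β ∈ R.pos := by
  rcases hR.pos_or_neg β hβ with h' | h'
  · exact absurd h'.1 h
  · exact h'.2

lemma simple_ne_zero (i : Fin R.r) : R.α i ≠ 0 := hR.ne_zero _ (hR.simple_mem i)

/-- A simple reflection maps positive roots not proportional to the simple root
to positive roots not proportional to it. -/
lemma S_pos_of_not_prop {j : Fin R.r} {β : R.V} (hβ : β ∈ R.pos)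
    (hnp : ∀ c : ℚ, β ≠ c • R.α j) : R.S j β ∈ R.pos ∧ ∀ c : ℚ, R.S j β ≠ c • R.α j := by
  have hβΦ : β ∈ R.Φ := hR.pos_subset hβ
  obtain ⟨c, hc, hcsum⟩ := hR.pos_nonneg_comb β hβ
  have hk : ∃ k, k ≠ j ∧ 0 < c k := by
    by_contra h
    push_neg at h
    apply hnp (c j)
    rw [hcsum]
    rw [Finset.sum_eq_single j]
    · intro b _ hb
      have : c b = 0 := le_antisymm (by simpa [hb] using h b hb) (hc b)
      rw [this, zero_smul]
    · intro hj; exact absurd (Finset.mem_univ j) hj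
  obtain ⟨k, hkj, hck⟩ := hk
  have hSβΦ : R.S j β ∈ R.Φ := s_mem_Φ hR (hR.simple_mem j) hβΦ
  have hSform : R.S j β = β - R.coroot (R.α j) β • R.α j := S_apply hR j β
  constructor
  · by_contra hneg
    obtain ⟨d, hd, hdsum⟩ := hR.pos_nonneg_comb _ (pos_or_neg' hR hSβΦ hneg)
    set m := R.coroot (R.α j) β with hm
    have hzero : ∑ i, ((c i + d i) - (if i = j then m else 0)) • R.α i = 0 := by
      have hsplit : ∑ i, ((c i + d i) - (if i = j then m else 0)) • R.α i
          = ((∑ i, c i • R.α i) + (∑ i, d i • R.α i)) - m • R.α j := by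
        simp only [sub_smul, add_smul, Finset.sum_sub_distrib, Finset.sum_add_distrib,
          ite_smul, zero_smul]
        rw [Finset.sum_ite_eq' Finset.univ j (fun i => m • R.α i)]
        simp
      rw [hsplit, ← hcsum, ← hdsum, hSform]
      abel
    have hlin := Fintype.linearIndependent_iff.1 hR.indep _ hzero
    have hk2 : c k + d k - (if k = j then m else 0) = 0 := hlin k
    rw [if_neg hkj] at hk2
    linarith [hd k]
  · intro e he
    apply hnp (-e)
    have : R.S j (R.S j β) = β := by
      have := congrArg (fun w : R.Aut => w β) (S_mul_self hR j)
      exact this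
    rw [he] at this
    rw [← this, map_smul, S_apply hR j, hR.coroot_self _ (hR.simple_mem j)]
    rw [show R.α j - (2:ℚ) • R.α j = -R.α j by module, smul_neg, neg_smul]

lemma eq_smul_simple_of_flip {j : Fin R.r} {β : R.V} (hβ : β ∈ R.pos)
    (hflip : R.S j β ∉ R.pos) : ∃ c : ℚ, 0 < c ∧ β = c • R.α j := by
  by_cases h : ∀ c : ℚ, β ≠ c • R.α j
  · exact absurd (S_pos_of_not_prop hR hβ h).1 hflip
  · push_neg at h
    obtain ⟨c, hc⟩ := h
    refine ⟨c, ?_, hc⟩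
    rcases lt_trichotomy c 0 with h0 | h0 | h0
    · exfalso
      refine neg_not_pos hR hβ (pos_of_nonneg_comb hR (neg_mem_Φ hR (hR.pos_subset hβ))
        (c := fun i => if i = j then -c else 0) ?_ ?_)
      · intro i; split
        · linarith
        · exact le_refl 0
      · rw [hc]
        simp only [ite_smul, zero_smul]
        rw [Finset.sum_ite_eq' Finset.univ j (fun i => (-c) • R.α i)]
        simp
    · exfalso
      apply hR.ne_zero β (hR.pos_subset hβ)
      rw [hc, h0, zero_smul]
    · exact h0

lemma s_smul_simple {j : Fin R.r} {c : ℚ} (hc : c ≠ 0) (hcα : c • R.α j ∈ R.Φ) :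
    R.s (c • R.α j) = R.S j := by
  apply LinearEquiv.toLinearMap_injective
  apply LinearMap.ext
  intro v
  show R.s (c • R.α j) v = R.S j v
  rw [s_apply' hR hcα, S_apply hR j]
  congr 1
  rw [smul_smul, coroot_smul_eq hR (hR.simple_mem j) hc hcα]

/-! ### Words and length -/

omit hR in
lemma wordProd_nil : R.wordProd ([] : List (Fin R.r)) = 1 := rfl

omit hR in
lemma wordProd_cons (i : Fin R.r) (l : List (Fin R.r)) :
    R.wordProd (i :: l) = R.S i * R.wordProd l := by
  simp [wordProd]

omit hR in
lemma wordProd_append (l m : List (Fin R.r)) :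
    R.wordProd (l ++ m) = R.wordProd l * R.wordProd m := by
  simp [wordProd]

omit hR in
lemma wordProd_mem (l : List (Fin R.r)) : R.wordProd l ∈ R.weylGroup := by
  induction l with
  | nil => exact one_mem _
  | cons i t ih =>
    rw [wordProd_cons]
    exact mul_mem (Subgroup.subset_closure ⟨i, rfl⟩) ih

lemma wordProd_reverse (l : List (Fin R.r)) :
    R.wordProd l.reverse = (R.wordProd l)⁻¹ := by
  induction l with
  | nil => simp [wordProd]
  | cons i t ih =>
    have h1 : R.wordProd [i] = R.S i := by simp [wordProd]
    rw [List.reverse_cons, wordProd_append, ih, h1, wordProd_cons, mul_inv_rev, S_inv hR i]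

lemma exists_word {w : R.Aut} (hw : w ∈ R.weylGroup) : ∃ l, R.wordProd l = w := by
  induction hw using Subgroup.closure_induction with
  | mem x hx => obtain ⟨i, rfl⟩ := hx; exact ⟨[i], by simp [wordProd]⟩
  | one => exact ⟨[], rfl⟩
  | mul x y hx hy ihx ihy =>
    obtain ⟨lx, hlx⟩ := ihx; obtain ⟨ly, hly⟩ := ihy
    exact ⟨lx ++ ly, by rw [wordProd_append, hlx, hly]⟩
  | inv x hx ihx =>
    obtain ⟨lx, hlx⟩ := ihx
    exact ⟨lx.reverse, by rw [wordProd_reverse hR, hlx]⟩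

lemma len_spec {w : R.Aut} (hw : w ∈ R.weylGroup) :
    ∃ l, R.wordProd l = w ∧ l.length = R.len w := by
  have hne : {n | ∃ l : List (Fin R.r), l.length = n ∧ R.wordProd l = w}.Nonempty := by
    obtain ⟨l, hl⟩ := exists_word hR hw
    exact ⟨l.length, l, rfl, hl⟩
  obtain ⟨l, hlen, hprod⟩ := Nat.sInf_mem hne
  exact ⟨l, hprod, hlen⟩

omit hR in
lemma len_le (l : List (Fin R.r)) : R.len (R.wordProd l) ≤ l.length :=
  Nat.sInf_le ⟨l, rfl, rfl⟩

omit hR in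
lemma len_le' {w : R.Aut} {l : List (Fin R.r)} (h : R.wordProd l = w) :
    R.len w ≤ l.length := h ▸ len_le l

omit hR in
lemma len_one : R.len (1 : R.Aut) = 0 :=
  Nat.le_zero.1 (len_le' (wordProd_nil (R := R)))

lemma len_mul_le {u v : R.Aut} (hu : u ∈ R.weylGroup) (hv : v ∈ R.weylGroup) :
    R.len (u * v) ≤ R.len u + R.len v := by
  obtain ⟨lu, hlu, hlu'⟩ := len_spec hR hu
  obtain ⟨lv, hlv, hlv'⟩ := len_spec hR hv
  calc R.len (u * v) ≤ (lu ++ lv).length := len_le' (by rw [wordProd_append, hlu, hlv])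
  _ = R.len u + R.len v := by simp [hlu', hlv']

lemma S_ne_one (i : Fin R.r) : R.S i ≠ 1 := by
  intro h
  have : R.S i (R.α i) = R.α i := by rw [h]; rfl
  rw [S_apply hR, hR.coroot_self _ (hR.simple_mem i)] at this
  exact simple_ne_zero hR i (by simpa using (sub_eq_self.1 this))

lemma len_S (i : Fin R.r) : R.len (R.S i) = 1 := by
  have h1 : R.len (R.S i) ≤ 1 := len_le' (l := [i]) (by simp [wordProd])
  rcases Nat.lt_or_ge (R.len (R.S i)) 1 with h | h
  · exfalso
    have h0 : R.len (R.S i) = 0 := by omega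
    obtain ⟨l, hl, hlen⟩ := len_spec hR (S_mem_weylGroup hR i)
    rw [h0, List.length_eq_zero_iff] at hlen
    rw [hlen] at hl
    exact S_ne_one hR i (hl.symm)
  · exact le_antisymm h1 h

/-! ### Strong exchange -/

lemma strong_exchange (l : List (Fin R.r)) {β : R.V} (hβ : β ∈ R.pos)
    (hneg : R.wordProd l β ∉ R.pos) :
    ∃ p < l.length, R.wordProd l * R.s β = R.wordProd (l.eraseIdx p) := by
  have hβΦ : β ∈ R.Φ := hR.pos_subset hβ
  induction l with
  | nil => exact absurd (show (β : R.V) ∈ R.pos from hβ) hneg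
  | cons j t ih =>
    by_cases hu : R.wordProd t β ∈ R.pos
    · have hflip : R.S j (R.wordProd t β) ∉ R.pos := by
        rw [wordProd_cons] at hneg
        exact hneg
      obtain ⟨c, hc0, hc⟩ := eq_smul_simple_of_flip hR hu hflip
      have hwβΦ : R.wordProd t β ∈ R.Φ :=
        bigG_maps hR (weyl_mem_bigG hR (wordProd_mem t)) β hβΦ
      have hconj : R.s (R.wordProd t β) = R.wordProd t * R.s β * (R.wordProd t)⁻¹ :=
        s_conj hR (weyl_mem_bigG hR (wordProd_mem t)) hβΦ
      have hSj : R.S j = R.wordProd t * R.s β * (R.wordProd t)⁻¹ := by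
        rw [← hconj, hc, s_smul_simple hR (ne_of_gt hc0) (hc ▸ hwβΦ)]
      refine ⟨0, Nat.succ_pos _, ?_⟩
      have hkey : R.S j * R.wordProd t * R.s β = R.wordProd t := by
        rw [hSj, inv_mul_cancel_right, mul_assoc, s_mul_self hR hβΦ, mul_one]
      rw [List.eraseIdx_cons_zero, wordProd_cons]
      exact hkey
    · obtain ⟨p, hp, hprod⟩ := ih hu
      refine ⟨p + 1, by simpa using hp, ?_⟩
      rw [List.eraseIdx_cons_succ, wordProd_cons, wordProd_cons, mul_assoc, hprod]

lemma len_lt_of_flip {w : R.Aut} (hw : w ∈ R.weylGroup) {β : R.V} (hβ : β ∈ R.pos)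
    (hneg : w β ∉ R.pos) : R.len (w * R.s β) < R.len w := by
  obtain ⟨l, hl, hlen⟩ := len_spec hR hw
  subst hl
  obtain ⟨p, hp, hprod⟩ := strong_exchange hR l hβ hneg
  calc R.len (R.wordProd l * R.s β) ≤ (l.eraseIdx p).length := len_le' hprod.symm
    _ < l.length := by
        rw [List.length_eraseIdx_of_lt hp]
        omega
    _ = R.len (R.wordProd l) := hlen

lemma len_lt_of_pos {w : R.Aut} {β : R.V} (hw : w ∈ R.weylGroup) (hβ : β ∈ R.pos)
    (hws : w * R.s β ∈ R.weylGroup) (hpos : w β ∈ R.pos) : R.len w < R.len (w * R.s β) := by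
  have hβΦ : β ∈ R.Φ := hR.pos_subset hβ
  have hflip : (w * R.s β) β ∉ R.pos := by
    have : (w * R.s β) β = w (R.s β β) := rfl
    rw [this, s_apply_self (hR.coroot_self β hβΦ), map_neg]
    exact neg_not_pos hR hpos
  have := len_lt_of_flip hR hws hβ hflip
  rwa [mul_assoc, s_mul_self hR hβΦ, mul_one] at this

end RootData
lemma sublist_concat_cases {α : Type*} {l' b : List α} {j : α} (h : l'.Sublist (b ++ [j])) :
    l'.Sublist b ∨ ∃ b', l' = b' ++ [j] ∧ b'.Sublist b := by
  rw [List.sublist_append_iff] at h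
  obtain ⟨l₁, l₂, rfl, h1, h2⟩ := h
  rcases List.sublist_singleton.1 h2 with rfl | rfl
  · left; simpa using h1
  · right; exact ⟨l₁, rfl, h1⟩

namespace RootData

variable {R : RootData} (hR : R.IsRootSystem)
include hR

omit hR in
lemma S_def (i : Fin R.r) : R.S i = R.s (R.α i) := rfl

/-! ### Left-handed exchange and length lemmas -/

lemma S_mul_eq {w : R.Aut} (hw : w ∈ R.weylGroup) (i : Fin R.r) :
    R.S i * w = w * R.s (w⁻¹ (R.α i)) := by
  have hwG : w ∈ R.bigG := weyl_mem_bigG hR hw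
  have hγΦ : w⁻¹ (R.α i) ∈ R.Φ :=
    bigG_maps hR (inv_mem hwG) _ (hR.simple_mem i)
  have hconj : R.s (w (w⁻¹ (R.α i))) = w * R.s (w⁻¹ (R.α i)) * w⁻¹ := s_conj hR hwG hγΦ
  rw [aut_apply_inv_apply] at hconj
  have h2 : R.S i = w * R.s (w⁻¹ (R.α i)) * w⁻¹ := hconj
  rw [h2, inv_mul_cancel_right]

lemma left_exchange (l : List (Fin R.r)) (i : Fin R.r)
    (h : (R.wordProd l)⁻¹ (R.α i) ∉ R.pos) :
    ∃ p < l.length, R.S i * R.wordProd l = R.wordProd (l.eraseIdx p) := by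
  set w := R.wordProd l with hw
  have hwW : w ∈ R.weylGroup := wordProd_mem l
  have hγΦ : w⁻¹ (R.α i) ∈ R.Φ :=
    bigG_maps hR (inv_mem (weyl_mem_bigG hR hwW)) _ (hR.simple_mem i)
  have hnγ : -(w⁻¹ (R.α i)) ∈ R.pos := pos_or_neg' hR hγΦ h
  have hneg : w (-(w⁻¹ (R.α i))) ∉ R.pos := by
    rw [map_neg, aut_apply_inv_apply]
    exact neg_not_pos hR (hR.simple_pos i)
  obtain ⟨p, hp, hprod⟩ := strong_exchange hR l hnγ hneg
  refine ⟨p, hp, ?_⟩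
  rw [S_mul_eq hR hwW i, ← s_neg hR hγΦ]
  exact hprod

lemma len_S_mul_lt {w : R.Aut} (hw : w ∈ R.weylGroup) (i : Fin R.r)
    (h : w⁻¹ (R.α i) ∉ R.pos) : R.len (R.S i * w) < R.len w := by
  obtain ⟨l, hl, hlen⟩ := len_spec hR hw
  subst hl
  obtain ⟨p, hp, hprod⟩ := left_exchange hR l i h
  calc R.len (R.S i * R.wordProd l) ≤ (l.eraseIdx p).length := len_le' hprod.symm
    _ < l.length := by rw [List.length_eraseIdx_of_lt hp]; omega
    _ = _ := hlen

lemma len_lt_S_mul {w : R.Aut} (hw : w ∈ R.weylGroup) (i : Fin R.r)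
    (h : w⁻¹ (R.α i) ∈ R.pos) : R.len w < R.len (R.S i * w) := by
  have hw' : R.S i * w ∈ R.weylGroup := mul_mem (S_mem_weylGroup hR i) hw
  have hkey : (R.S i * w)⁻¹ (R.α i) ∉ R.pos := by
    have h1 : (R.S i * w)⁻¹ (R.α i) = w⁻¹ (R.S i (R.α i)) := by
      rw [mul_inv_rev, S_inv hR i]; rfl
    rw [h1, S_def i, s_apply_self (hR.coroot_self _ (hR.simple_mem i)), map_neg]
    exact neg_not_pos hR h
  have := len_S_mul_lt hR hw' i hkey
  rwa [← mul_assoc, S_mul_self hR i, one_mul] at this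

lemma len_mul_S_lt_or {u : R.Aut} (hu : u ∈ R.weylGroup) (i : Fin R.r) :
    R.len u < R.len (u * R.S i) ∨ R.len (u * R.S i) < R.len u := by
  have huS : u * R.S i ∈ R.weylGroup := mul_mem hu (S_mem_weylGroup hR i)
  by_cases h : u (R.α i) ∈ R.pos
  · left; exact len_lt_of_pos hR hu (hR.simple_pos i) huS h
  · right; exact len_lt_of_flip hR hu (hR.simple_pos i) h

/-! ### Reduced words -/

omit hR in
lemma reduced_nil : R.Reduced [] := by
  show R.len (R.wordProd []) = _
  rw [wordProd_nil, len_one]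
  rfl

lemma reduced_append {a b : List (Fin R.r)} (h : R.Reduced (a ++ b)) :
    R.Reduced a ∧ R.Reduced b := by
  have ha := len_le (R := R) a
  have hb := len_le (R := R) b
  have hab : R.len (R.wordProd a * R.wordProd b) ≤ R.len (R.wordProd a) + R.len (R.wordProd b) :=
    len_mul_le hR (wordProd_mem a) (wordProd_mem b)
  have h' : R.len (R.wordProd a * R.wordProd b) = a.length + b.length := by
    have h'' : R.len (R.wordProd (a ++ b)) = (a ++ b).length := h
    rw [wordProd_append] at h''
    simpa using h''
  constructor <;> · show R.len _ = _; omega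

lemma reduced_cons {i : Fin R.r} {t : List (Fin R.r)} (h : R.Reduced (i :: t)) :
    R.Reduced t ∧ R.len (R.wordProd (i :: t)) = R.len (R.wordProd t) + 1 := by
  have h0 : R.Reduced ([i] ++ t) := h
  have := reduced_append hR h0
  refine ⟨this.2, ?_⟩
  have ht : R.len (R.wordProd t) = t.length := this.2
  have h1 : R.len (R.wordProd (i :: t)) = (i :: t).length := h
  rw [h1, ht]
  simp

/-- Any word contains a reduced subword with the same product. -/
lemma exists_reduced_sublist (l : List (Fin R.r)) :
    ∃ l', l'.Sublist l ∧ R.wordProd l' = R.wordProd l ∧ R.Reduced l' := by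
  suffices H : ∀ n (l : List (Fin R.r)), l.length ≤ n →
      ∃ l', l'.Sublist l ∧ R.wordProd l' = R.wordProd l ∧ R.Reduced l' from
    H l.length l le_rfl
  intro n
  induction n with
  | zero =>
    intro l hl
    rw [Nat.le_zero, List.length_eq_zero_iff] at hl
    exact ⟨[], by simp [hl], by rw [hl], reduced_nil⟩
  | succ n ih =>
    intro l hl
    match l with
    | [] => exact ⟨[], by simp, rfl, reduced_nil⟩
    | i :: t =>
      have ht : t.length ≤ n := by simpa using hl
      obtain ⟨t', ht', hprod, hred⟩ := ih t ht
      by_cases hcase : R.Reduced (i :: t')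
      · exact ⟨i :: t', ht'.cons_cons i, by rw [wordProd_cons, wordProd_cons, hprod], hcase⟩
      · have hnpos : (R.wordProd t')⁻¹ (R.α i) ∉ R.pos := by
          intro hpos
          apply hcase
          have hr : R.len (R.wordProd t') = t'.length := hred
          have h1 := len_lt_S_mul hR (wordProd_mem t') i hpos
          have h2 : R.len (R.S i * R.wordProd t') ≤ R.len (R.wordProd t') + 1 := by
            have h3 := len_mul_le hR (S_mem_weylGroup hR i) (wordProd_mem t')
            have h4 := len_S hR i
            omega
          show R.len _ = _
          rw [wordProd_cons]
          simp only [List.length_cons]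
          omega
        obtain ⟨p, hp, hexch⟩ := left_exchange hR t' i hnpos
        have hlp : (t'.eraseIdx p).length ≤ n := by
          have h1 : t'.length ≤ t.length := ht'.length_le
          have := List.length_eraseIdx_of_lt hp
          omega
        obtain ⟨l'', hl'', hprod'', hred''⟩ := ih (t'.eraseIdx p) hlp
        refine ⟨l'', ?_, ?_, hred''⟩
        · exact hl''.trans ((List.eraseIdx_sublist t' p).trans
            (ht'.trans (List.sublist_cons_self i t)))
        · rw [hprod'', ← hexch, wordProd_cons, hprod]

end RootData

/-! ### The Bruhat chain order -/

/-- One step in the Bruhat order: multiply by a reflection, increasing length. -/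
def RootData.bstep (R : RootData) (x y : R.Aut) : Prop :=
  x ∈ R.weylGroup ∧ y ∈ R.weylGroup ∧
    ∃ β ∈ R.pos, y = x * R.s β ∧ R.len x < R.len y

/-- The Bruhat order as chains of reflection steps. -/
def RootData.bchain (R : RootData) : R.Aut → R.Aut → Prop :=
  Relation.ReflTransGen R.bstep

namespace RootData

variable {R : RootData} (hR : R.IsRootSystem)

lemma bchain_mem {u x : R.Aut} (h : R.bchain u x) (hx : x ∈ R.weylGroup) :
    u ∈ R.weylGroup := by
  rcases Relation.ReflTransGen.cases_head h with rfl | ⟨c, hc, _⟩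
  · exact hx
  · exact hc.1

include hR

/-- The master mutual induction: (A) chains give subwords of any reduced word,
(B) subwords give chains, then the two lifting properties. -/
lemma master : ∀ n : ℕ,
    (∀ w : R.Aut, ∀ l : List (Fin R.r), ∀ u : R.Aut, R.len w = n → R.Reduced l →
      R.wordProd l = w → R.bchain u w →
      ∃ l', l'.Sublist l ∧ R.wordProd l' = u ∧ R.Reduced l') ∧
    (∀ l : List (Fin R.r), l.length = n → R.Reduced l → ∀ l', l'.Sublist l →
      R.bchain (R.wordProd l') (R.wordProd l)) ∧
    (∀ x u : R.Aut, ∀ i : Fin R.r, R.len x = n → x ∈ R.weylGroup → R.bchain u x →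
      R.len (x * R.S i) < R.len x → R.len u < R.len (u * R.S i) →
      R.bchain (u * R.S i) x) ∧
    (∀ w u : R.Aut, ∀ i : Fin R.r, R.len w = n → w ∈ R.weylGroup → R.bchain u w →
      R.len w < R.len (w * R.S i) → R.len u < R.len (u * R.S i) →
      R.bchain (u * R.S i) (w * R.S i)) := by
  intro n
  induction n using Nat.strong_induction_on with
  | _ n ih =>
  have partA : ∀ w : R.Aut, ∀ l : List (Fin R.r), ∀ u : R.Aut, R.len w = n → R.Reduced l →
      R.wordProd l = w → R.bchain u w →
      ∃ l', l'.Sublist l ∧ R.wordProd l' = u ∧ R.Reduced l' := by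
    intro w l u hn hred hprod hch
    rcases Relation.ReflTransGen.cases_tail hch with rfl | ⟨x, hux, hstep⟩
    · exact ⟨l, List.Sublist.refl l, hprod, hred⟩
    · obtain ⟨hxW, hwW, β, hβ, hweq, hlenlt⟩ := hstep
      have hβΦ : β ∈ R.Φ := hR.pos_subset hβ
      have hx : w * R.s β = x := by
        rw [hweq, mul_assoc, s_mul_self hR hβΦ, mul_one]
      have hneg : w β ∉ R.pos := by
        intro hpos
        have := len_lt_of_pos hR hwW hβ (hx ▸ hxW) hpos
        rw [hx] at this
        omega
      have hneg' : R.wordProd l β ∉ R.pos := by rwa [hprod]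
      obtain ⟨p, hp, hexch⟩ := strong_exchange hR l hβ hneg'
      have hxprod : R.wordProd (l.eraseIdx p) = x := by
        rw [← hexch, hprod, hx]
      obtain ⟨m, hm, hmprod, hmred⟩ := exists_reduced_sublist hR (l.eraseIdx p)
      have hmx : R.wordProd m = x := by rw [hmprod, hxprod]
      have hlenx : R.len x < n := by omega
      obtain ⟨l', hl', hl'prod, hl'red⟩ :=
        (ih (R.len x) hlenx).1 x m u rfl hmred hmx hux
      exact ⟨l', hl'.trans (hm.trans (List.eraseIdx_sublist l p)), hl'prod, hl'red⟩
  have partB : ∀ l : List (Fin R.r), l.length = n → R.Reduced l → ∀ l', l'.Sublist l →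
      R.bchain (R.wordProd l') (R.wordProd l) := by
    intro l hlen hred l' hsub
    rcases List.eq_nil_or_concat' l with rfl | ⟨b, j, rfl⟩
    · rw [List.sublist_nil.1 hsub]
      exact Relation.ReflTransGen.refl
    · have hbred : R.Reduced b := (reduced_append hR hred).1
      have hb1 : b.length + 1 = n := by rw [← hlen]; simp
      have hbn : b.length < n := by omega
      have hredeq : R.len (R.wordProd (b ++ [j])) = (b ++ [j]).length := hred
      have hbredeq : R.len (R.wordProd b) = b.length := hbred
      have hlprod : R.wordProd (b ++ [j]) = R.wordProd b * R.S j := by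
        simp [wordProd]
      have hstepbw : R.bstep (R.wordProd b) (R.wordProd (b ++ [j])) := by
        refine ⟨wordProd_mem b, wordProd_mem _, R.α j, hR.simple_pos j, hlprod, ?_⟩
        rw [hredeq, hbredeq]
        simp
      rcases sublist_concat_cases hsub with hcase | ⟨b', rfl, hb'⟩
      · exact ((ih b.length hbn).2.1 b rfl hbred l' hcase).tail hstepbw
      · have hchain : R.bchain (R.wordProd b') (R.wordProd b) :=
          (ih b.length hbn).2.1 b rfl hbred b' hb'
        have hb'W := wordProd_mem (R := R) b'
        have hl'prod : R.wordProd (b' ++ [j]) = R.wordProd b' * R.S j := by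
          simp [wordProd]
        rcases len_mul_S_lt_or hR hb'W j with hup | hdown
        · have hwasc : R.len (R.wordProd b) < R.len (R.wordProd b * R.S j) := by
            rw [← hlprod, hredeq, hbredeq]; simp
          have := (ih b.length hbn).2.2.2 (R.wordProd b) (R.wordProd b') j hbredeq
            (wordProd_mem b) hchain hwasc hup
          rw [hl'prod, hlprod]
          exact this
        · have hstep : R.bstep (R.wordProd b' * R.S j) (R.wordProd b') := by
            refine ⟨mul_mem hb'W (S_mem_weylGroup hR j), hb'W, R.α j, hR.simple_pos j, ?_, hdown⟩
            rw [← S_def j, mul_assoc, S_mul_self hR j, mul_one]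
          rw [hl'prod]
          exact (Relation.ReflTransGen.single hstep).trans (hchain.tail hstepbw)
  have partD : ∀ x u : R.Aut, ∀ i : Fin R.r, R.len x = n → x ∈ R.weylGroup → R.bchain u x →
      R.len (x * R.S i) < R.len x → R.len u < R.len (u * R.S i) →
      R.bchain (u * R.S i) x := by
    intro x u i hn hxW hch hdesc hasc
    have hxneg : x (R.α i) ∉ R.pos := by
      intro hpos
      have h6 := len_lt_of_pos hR hxW (hR.simple_pos i)
        (mul_mem hxW (S_mem_weylGroup hR i)) hpos
      rw [← S_def i] at h6
      omega
    obtain ⟨m, hmprod, hmlen⟩ := len_spec hR hxW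
    have hmred : R.Reduced m := by show R.len _ = _; rw [hmprod, hmlen]
    have hmneg : R.wordProd m (R.α i) ∉ R.pos := by rwa [hmprod]
    obtain ⟨p, hp, hexch⟩ := strong_exchange hR m (hR.simple_pos i) hmneg
    rw [← S_def i] at hexch
    set c : List (Fin R.r) := m.eraseIdx p ++ [i] with hc
    have hSi : R.wordProd [i] = R.S i := by simp [wordProd]
    have hcprod : R.wordProd c = x := by
      rw [hc, wordProd_append, ← hexch, hmprod, hSi, mul_assoc,
        S_mul_self hR i, mul_one]
    have hclen : c.length = n := by
      have h1 : m.length = n := by omega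
      rw [hc, List.length_append, List.length_eraseIdx_of_lt hp, List.length_singleton]
      omega
    have hcred : R.Reduced c := by show R.len _ = _; rw [hcprod, hclen, hn]
    obtain ⟨c', hc', hc'prod, hc'red⟩ := partA x c u hn hcred hcprod hch
    rcases sublist_concat_cases hc' with hcase | ⟨ct, rfl, hct⟩
    · have hsub2 : (c' ++ [i]).Sublist c := hcase.append_right [i]
      have hprod2 : R.wordProd (c' ++ [i]) = u * R.S i := by
        rw [wordProd_append, hc'prod, hSi]
      have := partB c hclen hcred (c' ++ [i]) hsub2
      rwa [hprod2, hcprod] at this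
    · exfalso
      have hc'redeq : R.len (R.wordProd (ct ++ [i])) = (ct ++ [i]).length := hc'red
      have hulen : R.len u = ct.length + 1 := by
        rw [← hc'prod, hc'redeq]; simp
      have huS : u * R.S i = R.wordProd ct := by
        rw [← hc'prod, wordProd_append, hSi, mul_assoc, S_mul_self hR i, mul_one]
      have hle : R.len (u * R.S i) ≤ ct.length := by rw [huS]; exact len_le ct
      omega
  have partL : ∀ w u : R.Aut, ∀ i : Fin R.r, R.len w = n → w ∈ R.weylGroup → R.bchain u w →
      R.len w < R.len (w * R.S i) → R.len u < R.len (u * R.S i) →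
      R.bchain (u * R.S i) (w * R.S i) := by
    intro w u i hn hwW hch hwasc huasc
    rcases Relation.ReflTransGen.cases_tail hch with rfl | ⟨x, hux, hstep⟩
    · exact Relation.ReflTransGen.refl
    · obtain ⟨hxW, hwW', β, hβ, hweq, hlenlt⟩ := hstep
      have hβΦ : β ∈ R.Φ := hR.pos_subset hβ
      have hlenx : R.len x < n := by omega
      have hxSW : x * R.S i ∈ R.weylGroup := mul_mem hxW (S_mem_weylGroup hR i)
      have hwSW : w * R.S i ∈ R.weylGroup := mul_mem hwW (S_mem_weylGroup hR i)
      have hlenwS : R.len (w * R.S i) = n + 1 := by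
        have h1 : R.len (w * R.S i) ≤ R.len w + 1 := by
          have h2 := len_mul_le hR hwW (S_mem_weylGroup hR i)
          have h3 := len_S hR i
          omega
        omega
      rcases len_mul_S_lt_or hR hxW i with hxasc | hxdesc
      · have hchain1 : R.bchain (u * R.S i) (x * R.S i) :=
          (ih (R.len x) hlenx).2.2.2 x u i rfl hxW hux hxasc huasc
        have hlenxS : R.len (x * R.S i) = R.len x + 1 := by
          have h1 : R.len (x * R.S i) ≤ R.len x + 1 := by
            have h2 := len_mul_le hR hxW (S_mem_weylGroup hR i)
            have h3 := len_S hR i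
            omega
          omega
        have hδΦ : R.S i β ∈ R.Φ :=
          bigG_maps hR (weyl_mem_bigG hR (S_mem_weylGroup hR i)) β hβΦ
        have hconj : R.s (R.S i β) = R.S i * R.s β * R.S i := by
          have h4 := s_conj hR (weyl_mem_bigG hR (S_mem_weylGroup hR i)) hβΦ
          rwa [S_inv hR i] at h4
        have hgroup : w * R.S i = (x * R.S i) * (R.S i * R.s β * R.S i) := by
          rw [hweq]
          have h5 : x * R.S i * (R.S i * R.s β * R.S i)
              = x * (R.S i * R.S i) * (R.s β * R.S i) := by group
          rw [h5, S_mul_self hR i, mul_one, mul_assoc]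
        have hstep2 : R.bstep (x * R.S i) (w * R.S i) := by
          refine ⟨hxSW, hwSW, ?_⟩
          by_cases hsign : R.S i β ∈ R.pos
          · exact ⟨R.S i β, hsign, by rw [hgroup, hconj], by omega⟩
          · refine ⟨-(R.S i β), pos_or_neg' hR hδΦ hsign, ?_, by omega⟩
            rw [s_neg hR hδΦ, hgroup, hconj]
        exact hchain1.tail hstep2
      · have hchain1 : R.bchain (u * R.S i) x :=
          (ih (R.len x) hlenx).2.2.1 x u i rfl hxW hux hxdesc huasc
        have hstepxw : R.bstep x w := ⟨hxW, hwW, β, hβ, hweq, hlenlt⟩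
        have hstepw : R.bstep w (w * R.S i) :=
          ⟨hwW, hwSW, R.α i, hR.simple_pos i, rfl, hwasc⟩
        exact (hchain1.tail hstepxw).tail hstepw
  exact ⟨partA, partB, partD, partL⟩

/-- The subword property: if `u ≤ w` in Bruhat order then `u` is the product of
a subword of ANY reduced word for `w`. -/
lemma bruhat_subword {u w : R.Aut} (hu : R.BruhatLE u w) {l : List (Fin R.r)}
    (hl : R.Reduced l) (hprod : R.wordProd l = w) :
    ∃ l', l'.Sublist l ∧ R.wordProd l' = u := by
  obtain ⟨m, hmred, hmprod, m', hm', hm'prod⟩ := hu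
  have hchain : R.bchain u w := by
    rw [← hmprod, ← hm'prod]
    exact (master hR m.length).2.1 m rfl hmred m' hm'
  have hlen : R.len w = l.length := by rw [← hprod]; exact hl
  obtain ⟨l', hl', hl'prod, -⟩ := (master hR l.length).1 w l u hlen hl hprod hchain
  exact ⟨l', hl', hl'prod⟩

end RootData
/-! ### Minkowski theorem for polytopes over ℚ -/

section MinkowskiQ

variable {E : Type*} [AddCommGroup E] [Module ℚ E]

lemma finset_mem_convexHull_sum {F : Finset E} {x : E} :
    x ∈ convexHull ℚ (F : Set E) ↔
      ∃ w : E → ℚ, (∀ y ∈ F, 0 ≤ w y) ∧ ∑ y ∈ F, w y = 1 ∧ ∑ y ∈ F, w y • y = x := by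
  rw [Finset.mem_convexHull]
  constructor <;> rintro ⟨w, h0, h1, h2⟩ <;> refine ⟨w, h0, h1, ?_⟩
  · rw [← h2, Finset.centerMass_eq_of_sum_1 _ _ h1]
    simp
  · rw [Finset.centerMass_eq_of_sum_1 _ _ h1]
    simpa using h2

lemma extreme_mem_of_subset {A B : Set E} (hAB : A ⊆ B) {x : E}
    (hx : x ∈ B.extremePoints ℚ) (hxA : x ∈ A) : x ∈ A.extremePoints ℚ := by
  rw [mem_extremePoints]
  refine ⟨hxA, ?_⟩
  intro x₁ h₁ x₂ h₂ hseg
  exact (mem_extremePoints.1 hx).2 _ (hAB h₁) _ (hAB h₂) hseg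

lemma sum_weight_one_eq {F : Finset E} {w : E → ℚ} (h0 : ∀ y ∈ F, 0 ≤ w y)
    (h1 : ∑ y ∈ F, w y = 1) {a : E} (ha : a ∈ F) (hwa : w a = 1) :
    ∑ y ∈ F, w y • y = a := by
  have hz : ∀ y ∈ F, y ≠ a → w y = 0 := by
    intro y hy hya
    by_contra h
    have hpos : 0 < w y := lt_of_le_of_ne (h0 y hy) (Ne.symm h)
    have hsum : w a + ∑ x ∈ F.erase a, w x = 1 := by rw [Finset.add_sum_erase F w ha, h1]
    have hy' : y ∈ F.erase a := Finset.mem_erase.2 ⟨hya, hy⟩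
    have hle : w y ≤ ∑ x ∈ F.erase a, w x :=
      Finset.single_le_sum (fun x hx => h0 x (Finset.mem_of_mem_erase hx)) hy'
    rw [hwa] at hsum
    linarith
  rw [Finset.sum_eq_single a (fun y hy hya => by rw [hz y hy hya, zero_smul])
    (fun h => absurd ha h)]
  rw [hwa, one_smul]

lemma mem_convexHull_erase {F : Finset E} {a : E} (haF : a ∈ F)
    (ha : a ∉ (convexHull ℚ (F : Set E)).extremePoints ℚ) :
    a ∈ convexHull ℚ ((F.erase a : Finset E) : Set E) := by
  have haconv : a ∈ convexHull ℚ (F : Set E) := subset_convexHull ℚ _ haF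
  rw [mem_extremePoints] at ha
  push_neg at ha
  obtain ⟨x₁, hx₁, x₂, hx₂, hseg, hne⟩ := ha haconv
  obtain ⟨w₁, h10, h11, h12⟩ := finset_mem_convexHull_sum.1 hx₁
  obtain ⟨w₂, h20, h21, h22⟩ := finset_mem_convexHull_sum.1 hx₂
  obtain ⟨t₁, t₂, ht₁, ht₂, hts, hta⟩ := hseg
  set w : E → ℚ := fun y => t₁ * w₁ y + t₂ * w₂ y with hw
  have hw0 : ∀ y ∈ F, 0 ≤ w y := fun y hy =>
    add_nonneg (mul_nonneg ht₁.le (h10 y hy)) (mul_nonneg ht₂.le (h20 y hy))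
  have hw1 : ∑ y ∈ F, w y = 1 := by
    have h5 : ∑ y ∈ F, w y = t₁ * (∑ y ∈ F, w₁ y) + t₂ * (∑ y ∈ F, w₂ y) := by
      simp only [hw]
      rw [Finset.mul_sum, Finset.mul_sum, ← Finset.sum_add_distrib]
    rw [h5, h11, h21]
    linarith
  have hwa : ∑ y ∈ F, w y • y = a := by
    have h5 : ∀ y : E, w y • y = t₁ • (w₁ y • y) + t₂ • (w₂ y • y) := by
      intro y
      simp only [hw]
      rw [add_smul, smul_smul, smul_smul]
    calc ∑ y ∈ F, w y • y = ∑ y ∈ F, (t₁ • (w₁ y • y) + t₂ • (w₂ y • y)) :=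
          Finset.sum_congr rfl (fun y _ => h5 y)
      _ = t₁ • x₁ + t₂ • x₂ := by
          rw [Finset.sum_add_distrib, ← Finset.smul_sum, ← Finset.smul_sum, h12, h22]
      _ = a := hta
  have hwle : w a ≤ 1 := by
    have hsum : w a + ∑ x ∈ F.erase a, w x = 1 := by rw [Finset.add_sum_erase F w haF, hw1]
    have : 0 ≤ ∑ x ∈ F.erase a, w x :=
      Finset.sum_nonneg fun x hx => hw0 x (Finset.mem_of_mem_erase hx)
    linarith
  by_cases hwa1 : w a = 1
  · exfalso
    have hle1 : w₁ a ≤ 1 := by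
      have := Finset.single_le_sum (f := w₁) (fun y hy => h10 y hy) haF
      linarith
    have hle2 : w₂ a ≤ 1 := by
      have := Finset.single_le_sum (f := w₂) (fun y hy => h20 y hy) haF
      linarith
    have e1 : t₁ * w₁ a + t₂ * w₂ a = 1 := by simpa [hw] using hwa1
    have h1' : t₁ * (1 - w₁ a) + t₂ * (1 - w₂ a) = 0 := by linear_combination hts - e1
    have hprod1 : 0 ≤ t₁ * (1 - w₁ a) := mul_nonneg ht₁.le (by linarith)
    have hprod2 : 0 ≤ t₂ * (1 - w₂ a) := mul_nonneg ht₂.le (by linarith)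
    have hz1 : t₁ * (1 - w₁ a) = 0 := by linarith
    have hz2 : t₂ * (1 - w₂ a) = 0 := by linarith
    have hw1a : w₁ a = 1 := by
      rcases mul_eq_zero.1 hz1 with h | h
      · exact absurd h (ne_of_gt ht₁)
      · linarith
    have hw2a : w₂ a = 1 := by
      rcases mul_eq_zero.1 hz2 with h | h
      · exact absurd h (ne_of_gt ht₂)
      · linarith
    have hx1a : x₁ = a := by rw [← h12]; exact sum_weight_one_eq h10 h11 haF hw1a
    have hx2a : x₂ = a := by rw [← h22]; exact sum_weight_one_eq h20 h21 haF hw2a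
    exact hne hx1a hx2a
  · have hwalt : w a < 1 := lt_of_le_of_ne hwle hwa1
    have hsum : w a + ∑ x ∈ F.erase a, w x = 1 := by rw [Finset.add_sum_erase F w haF, hw1]
    refine finset_mem_convexHull_sum.2 ⟨fun y => w y / (1 - w a), ?_, ?_, ?_⟩
    · intro y hy
      exact div_nonneg (hw0 y (Finset.mem_of_mem_erase hy)) (by linarith)
    · rw [← Finset.sum_div]
      have h5 : ∑ y ∈ F.erase a, w y = 1 - w a := by linarith
      rw [h5, div_self (by linarith)]
    · have hsplit : w a • a + ∑ y ∈ F.erase a, w y • y = a := by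
        rw [Finset.add_sum_erase F (fun y => w y • y) haF]
        exact hwa
      have h6 : ∑ y ∈ F.erase a, w y • y = (1 - w a) • a := by
        rw [sub_smul, one_smul, eq_sub_iff_add_eq, add_comm]
        exact hsplit
      calc ∑ y ∈ F.erase a, (w y / (1 - w a)) • y
          = (1 - w a)⁻¹ • ∑ y ∈ F.erase a, w y • y := by
            rw [Finset.smul_sum]
            apply Finset.sum_congr rfl
            intro y _
            rw [smul_smul, div_eq_inv_mul]
        _ = (1 - w a)⁻¹ • ((1 - w a) • a) := by rw [h6]
        _ = a := by rw [smul_smul, inv_mul_cancel₀ (by linarith), one_smul]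

lemma convexHull_eq_convexHull_extremePoints {A : Set E} (hA : A.Finite) :
    convexHull ℚ A = convexHull ℚ ((convexHull ℚ A).extremePoints ℚ) := by
  suffices H : ∀ n (F : Finset E), F.card = n →
      convexHull ℚ (F : Set E) = convexHull ℚ ((convexHull ℚ (F : Set E)).extremePoints ℚ) by
    have := H hA.toFinset.card hA.toFinset rfl
    rwa [hA.coe_toFinset] at this
  intro n
  induction n using Nat.strong_induction_on with
  | _ n ih =>
  intro F hcard
  by_cases hall : ∀ a ∈ F, a ∈ (convexHull ℚ (F : Set E)).extremePoints ℚ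
  · apply le_antisymm
    · exact convexHull_min (fun a ha => subset_convexHull ℚ _ (hall a ha))
        (convex_convexHull ℚ _)
    · exact convexHull_min extremePoints_subset (convex_convexHull ℚ _)
  · push_neg at hall
    obtain ⟨a, haF, ha⟩ := hall
    have hkey : a ∈ convexHull ℚ ((F.erase a : Finset E) : Set E) := mem_convexHull_erase haF ha
    have heq : convexHull ℚ (F : Set E) = convexHull ℚ ((F.erase a : Finset E) : Set E) := by
      apply le_antisymm
      · apply convexHull_min _ (convex_convexHull ℚ _)
        intro b hb
        rcases eq_or_ne b a with rfl | hba
        · exact hkey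
        · exact subset_convexHull ℚ _ (Finset.mem_coe.2 (Finset.mem_erase.2 ⟨hba, hb⟩))
      · exact convexHull_mono (Finset.coe_subset.2 (Finset.erase_subset a F))
    have hlt : (F.erase a).card < n := by rw [← hcard]; exact Finset.card_erase_lt_of_mem haF
    rw [heq]
    exact ih _ hlt (F.erase a) rfl

end MinkowskiQ
/-! ### Segment membership helper -/

section SegHelper
variable {E : Type*} [AddCommGroup E] [Module ℚ E]

lemma seg_mem_aux (mu α' : E) {c n : ℚ} (h : (0 ≤ c ∧ c ≤ n) ∨ (n ≤ c ∧ c ≤ 0)) :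
    mu - c • α' ∈ segment ℚ mu (mu - n • α') := by
  rcases lt_trichotomy n 0 with hn | hn | hn
  · have h1 : n ≤ c ∧ c ≤ 0 := by
      rcases h with ⟨h1, h2⟩ | h2
      · constructor <;> linarith
      · exact h2
    have hb0 : 0 ≤ c / n := div_nonneg_of_nonpos h1.2 hn.le
    have hb1 : c / n ≤ 1 := by
      rw [div_le_one_of_neg hn]
      exact h1.1
    refine ⟨1 - c / n, c / n, by linarith, hb0, by ring, ?_⟩
    have hcn : c / n * n = c := div_mul_cancel₀ c (ne_of_lt hn)
    rw [smul_sub, smul_smul, hcn]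
    module
  · subst hn
    have hc0 : c = 0 := by rcases h with ⟨h1, h2⟩ | ⟨h1, h2⟩ <;> linarith
    subst hc0
    simp only [zero_smul, sub_zero]
    exact left_mem_segment ℚ mu mu
  · have h1 : 0 ≤ c ∧ c ≤ n := by
      rcases h with h2 | ⟨h1, h2⟩
      · exact h2
      · constructor <;> linarith
    have hb0 : 0 ≤ c / n := div_nonneg h1.1 hn.le
    have hb1 : c / n ≤ 1 := (div_le_one hn).2 h1.2
    refine ⟨1 - c / n, c / n, by linarith, hb0, by ring, ?_⟩
    have hcn : c / n * n = c := div_mul_cancel₀ c (ne_of_gt hn)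
    rw [smul_sub, smul_smul, hcn]
    module

end SegHelper

namespace RootData

variable {R : RootData} (hR : R.IsRootSystem)

/-! ### Evaluation of string sums -/

omit hR in
lemma string_sum_apply_ne {i : Fin R.r} (mu ν : R.V) (m : ℕ)
    (hν : ∀ k : ℕ, k < m → ν ≠ mu - (k : ℚ) • R.α i) :
    (∑ k ∈ Finset.range m, Finsupp.single (mu - (k : ℚ) • R.α i) (1 : ℤ)) ν = 0 := by
  rw [Finset.sum_apply']
  apply Finset.sum_eq_zero
  intro k hk
  rw [Finsupp.single_apply, if_neg]
  exact fun h => hν k (Finset.mem_range.1 hk) h.symm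

omit hR in
lemma nstring_sum_apply_ne {i : Fin R.r} (mu ν : R.V) (m : ℕ)
    (hν : ∀ k : ℕ, k < m → ν ≠ mu + ((k : ℚ) + 1) • R.α i) :
    (∑ k ∈ Finset.range m, Finsupp.single (mu + ((k : ℚ) + 1) • R.α i) (1 : ℤ)) ν = 0 := by
  rw [Finset.sum_apply']
  apply Finset.sum_eq_zero
  intro k hk
  rw [Finsupp.single_apply, if_neg]
  exact fun h => hν k (Finset.mem_range.1 hk) h.symm

omit hR in
lemma string_sum_apply_eq {i : Fin R.r} (hα : R.α i ≠ 0) (mu : R.V) (m : ℕ) (k₀ : ℕ)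
    (hk₀ : k₀ < m) :
    (∑ k ∈ Finset.range m, Finsupp.single (mu - (k : ℚ) • R.α i) (1 : ℤ))
      (mu - (k₀ : ℚ) • R.α i) = 1 := by
  rw [Finset.sum_apply']
  rw [Finset.sum_eq_single k₀]
  · rw [Finsupp.single_apply, if_pos rfl]
  · intro k hk hkk
    rw [Finsupp.single_apply, if_neg]
    intro heq
    apply hkk
    have h2 : (k : ℚ) • R.α i = (k₀ : ℚ) • R.α i := sub_right_injective heq
    have h3 : (k : ℚ) = (k₀ : ℚ) := smul_left_injective ℚ hα h2
    exact_mod_cast h3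
  · intro h
    exact absurd (Finset.mem_range.2 hk₀) h

/-! ### Properties of `demOnBasis` -/

variable {i : Fin R.r} {mu : R.V} {n : ℤ}

include hR

lemma demOnBasis_self_one (hn : R.coroot (R.α i) mu = (n : ℚ)) (h0 : 0 ≤ n) :
    (R.demOnBasis i mu) mu = 1 := by
  have hα : R.α i ≠ 0 := simple_ne_zero hR i
  simp only [demOnBasis, hn, Int.floor_intCast, if_pos h0]
  have h2 := string_sum_apply_eq hα mu (n.toNat + 1) 0 (Nat.succ_pos _)
  simpa using h2

lemma demOnBasis_end_one (hn : R.coroot (R.α i) mu = (n : ℚ)) (h0 : 0 ≤ n) :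
    (R.demOnBasis i mu) (mu - (n : ℚ) • R.α i) = 1 := by
  have hα : R.α i ≠ 0 := simple_ne_zero hR i
  simp only [demOnBasis, hn, Int.floor_intCast, if_pos h0]
  have h2 := string_sum_apply_eq hα mu (n.toNat + 1) n.toNat (Nat.lt_succ_self _)
  rwa [show ((n.toNat : ℕ) : ℚ) = (n : ℚ) by exact_mod_cast Int.toNat_of_nonneg h0] at h2

lemma demOnBasis_zero_of_neg (hn : R.coroot (R.α i) mu = (n : ℚ)) (h0 : n < 0) :
    (R.demOnBasis i mu) mu = 0 ∧ (R.demOnBasis i mu) (mu - (n : ℚ) • R.α i) = 0 := by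
  have hα : R.α i ≠ 0 := simple_ne_zero hR i
  rcases eq_or_ne n (-1) with hne | hne
  · simp only [demOnBasis, hn, Int.floor_intCast, hne]
    norm_num
  · have hn2 : n ≤ -2 := by omega
    simp only [demOnBasis, hn, Int.floor_intCast, if_neg (by omega : ¬ (0:ℤ) ≤ n),
      if_neg hne, Finsupp.neg_apply]
    constructor
    · rw [nstring_sum_apply_ne mu mu _ ?_, neg_zero]
      intro k hk heq
      have h3 : ((k : ℚ) + 1) • R.α i = 0 := (left_eq_add.1 heq)
      rcases smul_eq_zero.1 h3 with h4 | h4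
      · have : (0:ℚ) ≤ (k:ℚ) := by positivity
        linarith
      · exact hα h4
    · rw [nstring_sum_apply_ne mu (mu - (n:ℚ) • R.α i) _ ?_, neg_zero]
      intro k hk heq
      have h3 : mu + (-(n:ℚ)) • R.α i = mu + ((k : ℚ) + 1) • R.α i := by
        rw [← heq]; module
      have h4 : (-(n:ℚ)) • R.α i = ((k : ℚ) + 1) • R.α i := add_left_cancel h3
      have h5 : -(n:ℚ) = (k : ℚ) + 1 := smul_left_injective ℚ hα h4
      have h6 : -n = (k : ℤ) + 1 := by exact_mod_cast h5
      omega

lemma demOnBasis_support (hn : R.coroot (R.α i) mu = (n : ℚ)) {ν : R.V}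
    (hν : ν ∈ (R.demOnBasis i mu).support) :
    (∃ m : ℤ, ν = mu - (m : ℚ) • R.α i) ∧ ν ∈ segment ℚ mu (mu - (n : ℚ) • R.α i) := by
  rw [Finsupp.mem_support_iff] at hν
  rcases le_or_gt 0 n with h0 | h0
  · simp only [demOnBasis, hn, Int.floor_intCast, if_pos h0] at hν
    have hk : ∃ k : ℕ, k < n.toNat + 1 ∧ ν = mu - (k : ℚ) • R.α i := by
      by_contra hcon
      push_neg at hcon
      exact hν (string_sum_apply_ne mu ν _ (fun k hk heq => (hcon k hk) heq))
    obtain ⟨k, hk, rfl⟩ := hk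
    refine ⟨⟨(k : ℤ), by norm_cast⟩, ?_⟩
    apply seg_mem_aux
    left
    refine ⟨by positivity, ?_⟩
    have h5 : (k : ℤ) ≤ n := by omega
    exact_mod_cast h5
  · rcases eq_or_ne n (-1) with hne | hne
    · exfalso
      simp only [demOnBasis, hn, Int.floor_intCast, hne] at hν
      norm_num at hν
    · have hn2 : n ≤ -2 := by omega
      simp only [demOnBasis, hn, Int.floor_intCast, if_neg (by omega : ¬ (0:ℤ) ≤ n),
        if_neg hne, Finsupp.neg_apply, neg_ne_zero] at hν
      have hk : ∃ k : ℕ, k < (-n).toNat - 1 ∧ ν = mu + ((k : ℚ) + 1) • R.α i := by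
        by_contra hcon
        push_neg at hcon
        exact hν (nstring_sum_apply_ne mu ν _ (fun k hk heq => (hcon k hk) heq))
      obtain ⟨k, hk, rfl⟩ := hk
      have heq2 : mu + ((k : ℚ) + 1) • R.α i = mu - (-(k : ℚ) - 1) • R.α i := by module
      rw [heq2]
      refine ⟨⟨-(k : ℤ) - 1, by push_cast; ring_nf⟩, ?_⟩
      apply seg_mem_aux
      right
      constructor
      · have h5 : (k : ℤ) + 1 ≤ -n := by omega
        have h6 : ((k : ℚ) + 1) ≤ ((-n : ℤ) : ℚ) := by exact_mod_cast h5
        push_cast at h6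
        linarith
      · have h7 : (0:ℚ) ≤ (k:ℚ) := by positivity
        linarith

/-! ### The Demazure operator coefficients -/

omit hR in
lemma demOp_apply_coeff (i : Fin R.r) (κ : R.V →₀ ℤ) (ν : R.V) :
    (R.demOp i κ) ν = ∑ mu ∈ κ.support, κ mu * (R.demOnBasis i mu) ν := by
  simp [demOp, Finsupp.sum_apply, Finsupp.sum, Finsupp.smul_apply, smul_eq_mul]

omit hR in
lemma demOp_support_sub (i : Fin R.r) (κ : R.V →₀ ℤ) {ν : R.V}
    (hν : ν ∈ (R.demOp i κ).support) :
    ∃ mu ∈ κ.support, ν ∈ (R.demOnBasis i mu).support := by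
  by_contra h
  push_neg at h
  rw [Finsupp.mem_support_iff] at hν
  apply hν
  rw [demOp_apply_coeff]
  apply Finset.sum_eq_zero
  intro mu hmu
  have h2 := h mu hmu
  rw [Finsupp.mem_support_iff, not_not] at h2
  rw [h2, mul_zero]

lemma S_invol (i : Fin R.r) (x : R.V) : R.S i (R.S i x) = x := by
  have := congrArg (fun w : R.Aut => w x) (S_mul_self hR i)
  exact this

lemma coroot_S (i : Fin R.r) (x : R.V) :
    R.coroot (R.α i) (R.S i x) = - R.coroot (R.α i) x := by
  rw [S_apply hR, map_sub, map_smul, hR.coroot_self _ (hR.simple_mem i), smul_eq_mul]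
  ring

lemma S_apply_int (hn : R.coroot (R.α i) mu = (n : ℚ)) :
    R.S i mu = mu - (n : ℚ) • R.α i := by
  rw [S_apply hR, hn]

/-- The key coefficient computation at an extreme point. -/
lemma demOp_coeff_extreme {κ : R.V →₀ ℤ} {Q : Set R.V}
    (hsupp : ↑κ.support ⊆ Q) (hQinv : ∀ x ∈ Q, R.S i x ∈ Q)
    (hint : ∀ mu ∈ κ.support, ∃ m : ℤ, R.coroot (R.α i) mu = (m : ℚ))
    {ν : R.V} (hν : ν ∈ Q.extremePoints ℚ) {nν : ℤ}
    (hνn : R.coroot (R.α i) ν = (nν : ℚ)) :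
    (R.demOp i κ) ν = if 0 ≤ nν then κ ν else κ (R.S i ν) := by
  have hext := mem_extremePoints_iff_forall_segment.1 hν
  have hseg : ∀ mu ∈ κ.support, ν ∈ (R.demOnBasis i mu).support → mu = ν ∨ R.S i mu = ν := by
    intro mu hmu hms
    obtain ⟨m, hm⟩ := hint mu hmu
    have h2 := (demOnBasis_support hR hm hms).2
    rw [← S_apply_int hR hm] at h2
    exact hext.2 _ (hsupp hmu) _ (hQinv mu (hsupp hmu)) h2
  rw [demOp_apply_coeff]
  rcases le_or_gt 0 nν with h0 | h0
  · rw [if_pos h0]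
    rw [Finset.sum_eq_single ν]
    · by_cases hmem : ν ∈ κ.support
      · obtain ⟨m, hm⟩ := hint ν hmem
        have hmn : m = nν := by
          have : (m : ℚ) = (nν : ℚ) := by rw [← hm, hνn]
          exact_mod_cast this
        subst hmn
        rw [demOnBasis_self_one hR hm h0, mul_one]
      · rw [Finsupp.notMem_support_iff.1 hmem, zero_mul]
    · intro mu hmu hmune
      by_cases hms : ν ∈ (R.demOnBasis i mu).support
      · rcases hseg mu hmu hms with h | h
        · exact absurd h hmune
        · -- mu = S i ν, coroot of mu is -nν ≤ 0
          have hmueq : mu = R.S i ν := by rw [← h, S_invol hR]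
          obtain ⟨m, hm⟩ := hint mu hmu
          have hmn : m = -nν := by
            have h5 : R.coroot (R.α i) mu = -(nν : ℚ) := by
              rw [hmueq, coroot_S hR, hνn]
            have : (m : ℚ) = ((-nν : ℤ) : ℚ) := by rw [← hm, h5]; push_cast; ring
            exact_mod_cast this
          subst hmn
          rcases eq_or_lt_of_le h0 with he | hlt
          · -- nν = 0 : then S i mu = mu, so mu = ν, contradiction
            exfalso
            apply hmune
            have : R.S i ν = ν := by
              rw [S_apply_int hR hνn, ← he]
              simp
            rw [hmueq, this]
          · have hneg : -nν < 0 := by omega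
            have := (demOnBasis_zero_of_neg hR hm hneg).2
            have hν2 : ν = mu - ((-nν : ℤ) : ℚ) • R.α i := by
              rw [← S_apply_int hR hm, ← h]
            rw [← hν2] at this
            rw [this, mul_zero]
      · rw [Finsupp.notMem_support_iff.1 hms, mul_zero]
    · intro hnot
      rw [Finsupp.notMem_support_iff.1 hnot, zero_mul]
  · rw [if_neg (by omega)]
    rw [Finset.sum_eq_single (R.S i ν)]
    · by_cases hmem : R.S i ν ∈ κ.support
      · obtain ⟨m, hm⟩ := hint _ hmem
        have hmn : m = -nν := by
          have h5 : R.coroot (R.α i) (R.S i ν) = -(nν : ℚ) := by rw [coroot_S hR, hνn]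
          have : (m : ℚ) = ((-nν : ℤ) : ℚ) := by rw [← hm, h5]; push_cast; ring
          exact_mod_cast this
        subst hmn
        have hν2 : ν = R.S i ν - ((-nν : ℤ) : ℚ) • R.α i := by
          rw [← S_apply_int hR hm, S_invol hR]
        have hone : (R.demOnBasis i (R.S i ν)) ν = 1 := by
          nth_rewrite 2 [hν2]
          exact demOnBasis_end_one hR hm (by omega)
        rw [hone, mul_one]
      · rw [Finsupp.notMem_support_iff.1 hmem, zero_mul]
    · intro mu hmu hmune
      by_cases hms : ν ∈ (R.demOnBasis i mu).support
      · rcases hseg mu hmu hms with h | h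
        · -- mu = ν, coroot nν < 0, value at self is 0
          subst h
          obtain ⟨m, hm⟩ := hint mu hmu
          have hmn : m = nν := by
            have : (m : ℚ) = (nν : ℚ) := by rw [← hm, hνn]
            exact_mod_cast this
          subst hmn
          rw [(demOnBasis_zero_of_neg hR hm h0).1, mul_zero]
        · exfalso
          apply hmune
          rw [← h, S_invol hR]
      · rw [Finsupp.notMem_support_iff.1 hms, mul_zero]
    · intro hnot
      rw [Finsupp.notMem_support_iff.1 hnot, zero_mul]

end RootData
/-- The set of points `u·λ` for `u` a product of a sublist of `t`. -/
def RootData.sublistPts (R : RootData) (lam : R.V) (t : List (Fin R.r)) : Set R.V :=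
  {v | ∃ m, m.Sublist t ∧ v = R.wordProd m lam}

namespace RootData

variable {R : RootData} (hR : R.IsRootSystem) {lam : R.V}

omit hR in
lemma sublistPts_finite (t : List (Fin R.r)) : (R.sublistPts lam t).Finite := by
  have h : R.sublistPts lam t ⊆ (fun m => R.wordProd m lam) '' {m | m ∈ t.sublists} := by
    rintro v ⟨m, hm, rfl⟩
    exact ⟨m, List.mem_sublists.2 hm, rfl⟩
  exact Set.Finite.subset (Set.Finite.image _ t.sublists.finite_toSet) h

omit hR in
lemma sublistPts_cons (i : Fin R.r) (t : List (Fin R.r)) :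
    R.sublistPts lam (i :: t) = R.sublistPts lam t ∪ (R.S i) '' R.sublistPts lam t := by
  ext v
  constructor
  · rintro ⟨m, hm, rfl⟩
    rcases List.sublist_cons_iff.1 hm with h | ⟨r, rfl, hr⟩
    · exact Or.inl ⟨m, h, rfl⟩
    · right
      refine ⟨R.wordProd r lam, ⟨r, hr, rfl⟩, ?_⟩
      rw [wordProd_cons]
      rfl
  · rintro (⟨m, hm, rfl⟩ | ⟨y, ⟨m, hm, rfl⟩, rfl⟩)
    · exact ⟨m, hm.trans (List.sublist_cons_self i t), rfl⟩
    · exact ⟨i :: m, hm.cons_cons i, by rw [wordProd_cons]; rfl⟩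

include hR

lemma coroot_apply_weyl {u : R.Aut} (hu : u ∈ R.weylGroup) (j : Fin R.r) (v : R.V) :
    R.coroot (R.α j) (u v) = R.coroot (u⁻¹ (R.α j)) v := by
  have hγ : u⁻¹ (R.α j) ∈ R.Φ :=
    bigG_maps hR (inv_mem (weyl_mem_bigG hR hu)) _ (hR.simple_mem j)
  have h2 := coroot_equivariant hR (weyl_mem_bigG hR hu) hγ (u v)
  rw [aut_apply_inv_apply, aut_inv_apply_apply] at h2
  exact h2

lemma sublistPts_int (hwt : R.IsWeight lam) {t : List (Fin R.r)} {v : R.V}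
    (hv : v ∈ R.sublistPts lam t) (j : Fin R.r) :
    ∃ m : ℤ, R.coroot (R.α j) v = (m : ℚ) := by
  obtain ⟨m, hm, rfl⟩ := hv
  have hu := wordProd_mem (R := R) m
  rw [coroot_apply_weyl hR hu]
  exact hwt _ (bigG_maps hR (inv_mem (weyl_mem_bigG hR hu)) _ (hR.simple_mem j))

lemma hull_S_inv (i : Fin R.r) (t : List (Fin R.r)) :
    ∀ x ∈ convexHull ℚ (R.sublistPts lam (i :: t)),
      R.S i x ∈ convexHull ℚ (R.sublistPts lam (i :: t)) := by
  intro x hx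
  have himg : (R.S i) '' convexHull ℚ (R.sublistPts lam (i :: t))
      = convexHull ℚ ((R.S i) '' R.sublistPts lam (i :: t)) := by
    have h2 := (R.S i).toLinearMap.image_convexHull (R.sublistPts lam (i :: t))
    simpa using h2
  have hsub : (R.S i) '' R.sublistPts lam (i :: t) ⊆ R.sublistPts lam (i :: t) := by
    rintro - ⟨y, hy, rfl⟩
    rw [sublistPts_cons] at hy ⊢
    rcases hy with h | ⟨z, hz, rfl⟩
    · exact Or.inr ⟨y, h, rfl⟩
    · exact Or.inl (by rw [S_invol hR]; exact hz)
  have hmem : R.S i x ∈ (R.S i) '' convexHull ℚ (R.sublistPts lam (i :: t)) := ⟨x, hx, rfl⟩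
  rw [himg] at hmem
  exact convexHull_min (hsub.trans (subset_convexHull ℚ _)) (convex_convexHull ℚ _) hmem

lemma extreme_S_inv {Q : Set R.V} {i : Fin R.r} (hQinv : ∀ x ∈ Q, R.S i x ∈ Q) {ν : R.V}
    (hν : ν ∈ Q.extremePoints ℚ) : R.S i ν ∈ Q.extremePoints ℚ := by
  rw [mem_extremePoints_iff_forall_segment] at hν ⊢
  refine ⟨hQinv ν hν.1, ?_⟩
  intro x₁ h₁ x₂ h₂ hseg
  obtain ⟨a, b, ha, hb, hab, heq⟩ := hseg
  have hseg' : ν ∈ segment ℚ (R.S i x₁) (R.S i x₂) := by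
    refine ⟨a, b, ha, hb, hab, ?_⟩
    have h3 := congrArg (R.S i) heq
    rw [map_add, map_smul, map_smul, S_invol hR] at h3
    exact h3
  rcases hν.2 _ (hQinv x₁ h₁) _ (hQinv x₂ h₂) hseg' with h | h
  · left; rw [← S_invol hR i x₁, h]
  · right; rw [← S_invol hR i x₂, h]

/-- The main induction: support of the Demazure character is contained in the
polytope, extreme points of the polytope appear in the support, and all support
points have integral pairings. -/
lemma dem_invariant (hwt : R.IsWeight lam) (hdom : R.Dominant lam) :
    ∀ t : List (Fin R.r), R.Reduced t →
      (↑(R.demChar t lam).support ⊆ convexHull ℚ (R.sublistPts lam t)) ∧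
      ((convexHull ℚ (R.sublistPts lam t)).extremePoints ℚ ⊆ ↑(R.demChar t lam).support) ∧
      (∀ mu ∈ (R.demChar t lam).support, ∀ j : Fin R.r,
        ∃ m : ℤ, R.coroot (R.α j) mu = (m : ℚ)) := by
  intro t
  induction t with
  | nil =>
    intro _
    have hsupp : (R.demChar [] lam).support = {lam} := by
      show (Finsupp.single lam (1:ℤ)).support = {lam}
      exact Finsupp.support_single_ne_zero lam one_ne_zero
    have hpts : R.sublistPts lam [] = {lam} := by
      ext v
      constructor
      · rintro ⟨m, hm, rfl⟩
        rw [List.sublist_nil.1 hm]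
        rfl
      · rintro rfl
        exact ⟨[], List.Sublist.refl _, rfl⟩
    refine ⟨?_, ?_, ?_⟩
    · rw [hsupp, hpts]
      simpa using subset_convexHull ℚ ({lam} : Set R.V)
    · rw [hpts, convexHull_singleton, hsupp]
      intro x hx
      have := extremePoints_subset hx
      simpa using this
    · intro mu hmu j
      rw [hsupp] at hmu
      have : mu = lam := by simpa using hmu
      subst this
      exact hwt _ (hR.simple_mem j)
  | cons i t ihtt =>
    intro hred
    obtain ⟨hredt, -⟩ := reduced_cons hR hred
    obtain ⟨ih1, ih2, ih3⟩ := ihtt hredt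
    set κ := R.demChar t lam with hκ
    set A := R.sublistPts lam t with hA
    set Q := convexHull ℚ (R.sublistPts lam (i :: t)) with hQ
    have hconsset : R.sublistPts lam (i :: t) = A ∪ (R.S i) '' A := sublistPts_cons i t
    have hAQ : convexHull ℚ A ⊆ Q := by
      apply convexHull_mono
      rw [hconsset]
      exact Set.subset_union_left
    have hQinv : ∀ x ∈ Q, R.S i x ∈ Q := hull_S_inv hR i t
    have hsuppQ : ↑κ.support ⊆ Q := fun x hx => hAQ (ih1 hx)
    have hint3 : ∀ mu ∈ (R.demOp i κ).support, ∀ j : Fin R.r,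
        ∃ m : ℤ, R.coroot (R.α j) mu = (m : ℚ) := by
      intro mu hmu j
      obtain ⟨mu₀, hmu₀, hms⟩ := demOp_support_sub i κ hmu
      obtain ⟨m₀, hm₀⟩ := ih3 mu₀ hmu₀ i
      obtain ⟨⟨m, rfl⟩, -⟩ := demOnBasis_support hR hm₀ hms
      obtain ⟨a, ha⟩ := ih3 mu₀ hmu₀ j
      obtain ⟨b, hb⟩ := hR.crystallographic _ (hR.simple_mem j) _ (hR.simple_mem i)
      refine ⟨a - m * b, ?_⟩
      rw [map_sub, map_smul, ha, hb, smul_eq_mul]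
      push_cast
      ring
    have h1 : ↑(R.demOp i κ).support ⊆ Q := by
      intro ν hν
      obtain ⟨mu₀, hmu₀, hms⟩ := demOp_support_sub i κ (by exact_mod_cast hν)
      obtain ⟨m₀, hm₀⟩ := ih3 mu₀ hmu₀ i
      have hseg := (demOnBasis_support hR hm₀ hms).2
      rw [← S_apply_int hR hm₀] at hseg
      have hmuQ : mu₀ ∈ Q := hsuppQ (Finset.mem_coe.2 hmu₀)
      have hSQ := hQinv mu₀ hmuQ
      exact (convex_convexHull ℚ _).segment_subset hmuQ hSQ hseg
    have hkey : ∀ ν ∈ Q.extremePoints ℚ, ∀ nν : ℤ,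
        R.coroot (R.α i) ν = (nν : ℚ) → 0 ≤ nν → ν ∈ κ.support := by
      intro ν hν nν hνn h0
      have hνpts : ν ∈ R.sublistPts lam (i :: t) := extremePoints_convexHull_subset hν
      have hνA : ν ∈ A := by
        rw [hconsset] at hνpts
        rcases hνpts with h | ⟨y, hy, hyν⟩
        · exact h
        · rcases eq_or_lt_of_le h0 with he | hpos
          · have hfix : R.S i ν = ν := by
              rw [S_apply_int hR hνn, ← he]
              simp
            have hyeq : y = ν := by rw [← S_invol hR i y, hyν, hfix]
            exact hyeq ▸ hy
          · obtain ⟨mm, hmm, hyeq⟩ := hy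
            have hcor : R.coroot (R.α i) y = -(nν : ℚ) := by
              have hyν' : y = R.S i ν := by rw [← hyν, S_invol hR]
              rw [hyν', coroot_S hR, hνn]
            have huW := wordProd_mem (R := R) mm
            rw [hyeq, coroot_apply_weyl hR huW] at hcor
            have hnpos : (R.wordProd mm)⁻¹ (R.α i) ∉ R.pos := by
              intro hp
              have h5 := dominant_coroot_nonneg hR hdom hp
              rw [hcor] at h5
              have h6 : (0:ℚ) < (nν : ℚ) := by exact_mod_cast hpos
              linarith
            obtain ⟨p, hp, hexch⟩ := left_exchange hR mm i hnpos
            refine ⟨mm.eraseIdx p, (List.eraseIdx_sublist mm p).trans hmm, ?_⟩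
            rw [← hexch, aut_mul_apply, ← hyeq]
            exact hyν.symm
      have hνext : ν ∈ (convexHull ℚ A).extremePoints ℚ :=
        extreme_mem_of_subset hAQ hν (subset_convexHull ℚ A hνA)
      exact Finset.mem_coe.1 (ih2 hνext)
    have h2 : Q.extremePoints ℚ ⊆ ↑(R.demOp i κ).support := by
      intro ν hν
      have hνpts : ν ∈ R.sublistPts lam (i :: t) := extremePoints_convexHull_subset hν
      obtain ⟨nν, hνn⟩ := sublistPts_int hR hwt hνpts i
      have hcoeff := demOp_coeff_extreme hR hsuppQ hQinv (fun mu hmu => ih3 mu hmu i) hν hνn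
      rw [Finset.mem_coe, Finsupp.mem_support_iff, hcoeff]
      rcases le_or_gt 0 nν with h0 | h0
      · rw [if_pos h0]
        exact Finsupp.mem_support_iff.1 (hkey ν hν nν hνn h0)
      · rw [if_neg (by omega)]
        have hSν : R.S i ν ∈ Q.extremePoints ℚ := extreme_S_inv hR hQinv hν
        have hScor : R.coroot (R.α i) (R.S i ν) = ((-nν : ℤ) : ℚ) := by
          rw [coroot_S hR, hνn]
          push_cast
          ring
        exact Finsupp.mem_support_iff.1 (hkey (R.S i ν) hSν (-nν) hScor (by omega))
    exact ⟨h1, h2, hint3⟩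

end RootData

theorem statement0 (R : RootData) (hR : R.IsRootSystem)
    (lam : R.V) (hwt : R.IsWeight lam) (hdom : R.Dominant lam)
    (l : List (Fin R.r)) (hl : R.Reduced l) :
    convexHull ℚ (↑(R.demChar l lam).support : Set R.V) =
      convexHull ℚ {m | ∃ u : R.Aut, u ∈ R.weylGroup ∧
        R.BruhatLE u (R.wordProd l) ∧ m = u lam} := by
  obtain ⟨k1, k2, -⟩ := RootData.dem_invariant hR hwt hdom l hl
  have hfin : (R.sublistPts lam l).Finite := RootData.sublistPts_finite l
  have hMink := convexHull_eq_convexHull_extremePoints hfin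
  have hsub : convexHull ℚ (↑(R.demChar l lam).support : Set R.V)
      = convexHull ℚ (R.sublistPts lam l) := by
    apply le_antisymm
    · exact convexHull_min k1 (convex_convexHull ℚ _)
    · rw [hMink]
      exact convexHull_mono k2
  rw [hsub]
  apply le_antisymm
  · apply convexHull_mono
    rintro v ⟨m, hm, rfl⟩
    exact ⟨R.wordProd m, RootData.wordProd_mem m, ⟨l, hl, rfl, m, hm, rfl⟩, rfl⟩
  · apply convexHull_mono
    rintro v ⟨u, huW, hble, rfl⟩
    obtain ⟨l', hl', hl'prod⟩ := RootData.bruhat_subword hR hble hl rfl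
    exact ⟨l', hl', by rw [hl'prod]⟩
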